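/- For a binary erasure channel BEC(ε), the polarized channels are again (equivalent to) binary erasure channels with W^- ≅ BEC(2ε − ε²) and W^+ ≅ BEC(ε²). Consequently every bit-channel W^{(i)} of BEC(ε) is a BEC whose erasure probability is obtained by iterating the maps ε ↦ 2ε − ε² and ε ↦ ε². -/

import Mathlib

open Finset

/-- A discrete channel: nonnegative transition "probabilities" summing to one. -/
def IsChannel {X Y : Type} [Fintype Y] (W : X → Y → ℝ) : Prop :=
  (∀ x y, 0 ≤ W x y) ∧ ∀ x, ∑ y, W x y = 1

/-- `Wd` is (stochastically) degraded with respect to `W`. -/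
def Degraded {X Y Z : Type} [Fintype Y] [Fintype Z]
    (Wd : X → Z → ℝ) (W : X → Y → ℝ) : Prop :=
  ∃ P : Y → Z → ℝ, IsChannel P ∧ ∀ x z, Wd x z = ∑ y, P y z * W x y
/-- Arıkan's minus transform. -/
noncomputable def Wminus {Y : Type} (W : Fin 2 → Y → ℝ) : Fin 2 → Y × Y → ℝ :=
  fun u1 p => ∑ u2 : Fin 2, (1 / 2 : ℝ) * W (u1 + u2) p.1 * W u2 p.2

/-- Arıkan's plus transform. -/
noncomputable def Wplus {Y : Type} (W : Fin 2 → Y → ℝ) : Fin 2 → Y × Y × Fin 2 → ℝ :=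
  fun u2 p => (1 / 2 : ℝ) * W (p.2.2 + u2) p.1 * W u2 p.2.1
/-- Output alphabet of a polarized bit-channel indexed by a list of bits
(`true` = plus transform, `false` = minus transform). -/
def bitOut (Y : Type) : List Bool → Type
  | [] => Y
  | false :: bs => bitOut Y bs × bitOut Y bs
  | true :: bs => bitOut Y bs × bitOut Y bs × Fin 2

instance bitOutFintype (Y : Type) [inst : Fintype Y] : ∀ bs : List Bool, Fintype (bitOut Y bs)
  | [] => inst
  | false :: bs => letI := bitOutFintype Y bs
      inferInstanceAs (Fintype (bitOut Y bs × bitOut Y bs))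
  | true :: bs => letI := bitOutFintype Y bs
      inferInstanceAs (Fintype (bitOut Y bs × bitOut Y bs × Fin 2))

/-- The polarized bit-channel `W^{(i)}` where the binary expansion of `i - 1`
is the list of bits (`true` selecting the plus transform). -/
noncomputable def bitChannel {Y : Type} (W : Fin 2 → Y → ℝ) : (bs : List Bool) → Fin 2 → bitOut Y bs → ℝ
  | [] => W
  | false :: bs => Wminus (bitChannel W bs)
  | true :: bs => Wplus (bitChannel W bs)
/-- The binary erasure channel with erasure probability `ε`:
output `none` is the erasure symbol. -/
noncomputable def BEC (ε : ℝ) : Fin 2 → Option (Fin 2) → ℝ := fun x y =>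
  match y with
  | none => ε
  | some z => if z = x then 1 - ε else 0

/-- Channel equivalence: mutual degradation. -/
def ChEquiv {X Y Z : Type} [Fintype Y] [Fintype Z]
    (W : X → Y → ℝ) (V : X → Z → ℝ) : Prop :=
  Degraded W V ∧ Degraded V W

/-- The erasure probability of the bit-channel with bit-index `bs`, obtained by
iterating `x ↦ 2x − x²` (minus) and `x ↦ x²` (plus). -/
noncomputable def becIter (ε : ℝ) : List Bool → ℝ
  | [] => ε
  | false :: bs => 2 * becIter ε bs - (becIter ε bs) ^ 2
  | true :: bs => (becIter ε bs) ^ 2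

section BecPolarizationAux

lemma degraded_refl' {X Y : Type} [Fintype Y] (W : X → Y → ℝ) : Degraded W W := by
  classical
  refine ⟨fun y z => if z = y then 1 else 0, ⟨fun y z => by dsimp only; split <;> norm_num,
    fun y => by simp⟩, fun x z => by simp [ite_mul]⟩

lemma degraded_trans' {X Y Z T : Type} [Fintype Y] [Fintype Z] [Fintype T]
    {W : X → Z → ℝ} {V : X → T → ℝ} {U : X → Y → ℝ}
    (h1 : Degraded W V) (h2 : Degraded V U) : Degraded W U := by
  obtain ⟨P1, ⟨hP1n, hP1s⟩, hP1⟩ := h1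
  obtain ⟨P2, ⟨hP2n, hP2s⟩, hP2⟩ := h2
  refine ⟨fun y z => ∑ t, P2 y t * P1 t z, ⟨fun y z => Finset.sum_nonneg fun t _ =>
    mul_nonneg (hP2n y t) (hP1n t z), fun y => ?_⟩, fun x z => ?_⟩
  · rw [Finset.sum_comm]
    have : ∀ t, ∑ z, P2 y t * P1 t z = P2 y t := fun t => by
      rw [← Finset.mul_sum, hP1s t, mul_one]
    simp only [this]
    exact hP2s y
  · rw [hP1 x z]
    simp only [hP2]
    simp only [Finset.mul_sum]
    rw [Finset.sum_comm]
    refine Finset.sum_congr rfl fun y _ => ?_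
    rw [Finset.sum_mul]
    refine Finset.sum_congr rfl fun t _ => by ring

lemma chEquiv_trans' {X Y Z T : Type} [Fintype Y] [Fintype Z] [Fintype T]
    {W : X → Y → ℝ} {V : X → Z → ℝ} {U : X → T → ℝ}
    (h1 : ChEquiv W V) (h2 : ChEquiv V U) : ChEquiv W U :=
  ⟨degraded_trans' h1.1 h2.1, degraded_trans' h2.2 h1.2⟩

lemma prod_sum_helper' {Y Z : Type} [Fintype Y] [Fintype Z] (P Q : Y → Z → ℝ)
    (V1 V2 : Y → ℝ) (c : ℝ) (z1 z2 : Z) :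
    ∑ y1 : Y, ∑ y2 : Y, (P y1 z1 * Q y2 z2) * (c * V1 y1 * V2 y2)
      = c * (∑ y, P y z1 * V1 y) * (∑ y, Q y z2 * V2 y) := by
  rw [mul_assoc, Finset.sum_mul_sum, Finset.mul_sum]
  refine Finset.sum_congr rfl fun y1 _ => ?_
  rw [Finset.mul_sum]
  refine Finset.sum_congr rfl fun y2 _ => by ring

lemma degraded_wminus' {Y Z : Type} [Fintype Y] [Fintype Z]
    {W : Fin 2 → Z → ℝ} {V : Fin 2 → Y → ℝ} (h : Degraded W V) :
    Degraded (Wminus W) (Wminus V) := by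
  obtain ⟨P, ⟨hPn, hPs⟩, hP⟩ := h
  refine ⟨fun p q => P p.1 q.1 * P p.2 q.2, ⟨fun p q => mul_nonneg (hPn _ _) (hPn _ _),
    fun p => ?_⟩, fun u q => ?_⟩
  · rw [Fintype.sum_prod_type]
    simp only [← Finset.sum_mul, ← Finset.mul_sum, hPs]
    simp [hPs]
  · show Wminus W u q = ∑ p : Y × Y, (P p.1 q.1 * P p.2 q.2) * Wminus V u p
    have h1 : ∀ u2 : Fin 2, (1/2:ℝ) * W (u+u2) q.1 * W u2 q.2
        = ∑ y1, ∑ y2, (P y1 q.1 * P y2 q.2) * ((1/2:ℝ) * V (u+u2) y1 * V u2 y2) := by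
      intro u2
      rw [prod_sum_helper', ← hP, ← hP]
    calc Wminus W u q = ∑ u2 : Fin 2, ∑ y1, ∑ y2,
          (P y1 q.1 * P y2 q.2) * ((1/2:ℝ) * V (u+u2) y1 * V u2 y2) :=
        Finset.sum_congr rfl fun u2 _ => h1 u2
      _ = ∑ y1, ∑ y2, ∑ u2 : Fin 2,
          (P y1 q.1 * P y2 q.2) * ((1/2:ℝ) * V (u+u2) y1 * V u2 y2) := by
        rw [Finset.sum_comm]
        exact Finset.sum_congr rfl fun y1 _ => Finset.sum_comm
      _ = ∑ p : Y × Y, (P p.1 q.1 * P p.2 q.2) * Wminus V u p := by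
        rw [Fintype.sum_prod_type]
        exact Finset.sum_congr rfl fun y1 _ => Finset.sum_congr rfl fun y2 _ =>
          (Finset.mul_sum _ _ _).symm

lemma degraded_wplus' {Y Z : Type} [Fintype Y] [Fintype Z]
    {W : Fin 2 → Z → ℝ} {V : Fin 2 → Y → ℝ} (h : Degraded W V) :
    Degraded (Wplus W) (Wplus V) := by
  obtain ⟨P, ⟨hPn, hPs⟩, hP⟩ := h
  refine ⟨fun p q => P p.1 q.1 * P p.2.1 q.2.1 * (if q.2.2 = p.2.2 then 1 else 0),
    ⟨fun p q => mul_nonneg (mul_nonneg (hPn _ _) (hPn _ _))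
      (by by_cases h : q.2.2 = p.2.2 <;> simp [h]),
     fun p => ?_⟩, fun u q => ?_⟩
  · rw [Fintype.sum_prod_type]
    simp only [Fintype.sum_prod_type]
    simp [← Finset.sum_mul, ← Finset.mul_sum, hPs, Finset.sum_ite_eq]
  · show Wplus W u q = ∑ p : Y × Y × Fin 2,
      (P p.1 q.1 * P p.2.1 q.2.1 * (if q.2.2 = p.2.2 then 1 else 0)) * Wplus V u p
    rw [Fintype.sum_prod_type]
    simp only [Fintype.sum_prod_type]
    have key : ∀ y1 y2 : Y, ∑ b : Fin 2,
        (P y1 q.1 * P y2 q.2.1 * (if q.2.2 = b then 1 else 0)) * Wplus V u (y1, y2, b)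
        = (P y1 q.1 * P y2 q.2.1) * Wplus V u (y1, y2, q.2.2) := by
      intro y1 y2
      simp only [mul_ite, mul_one, mul_zero, ite_mul, zero_mul,
        Finset.sum_ite_eq, Finset.mem_univ, if_true]
    simp only [key]
    show (1/2 : ℝ) * W (q.2.2 + u) q.1 * W u q.2.1
      = ∑ y1 : Y, ∑ y2 : Y, (P y1 q.1 * P y2 q.2.1)
          * ((1/2 : ℝ) * V (q.2.2 + u) y1 * V u y2)
    rw [prod_sum_helper' P P (V (q.2.2 + u)) (V u) (1/2) q.1 q.2.1]
    rw [hP (q.2.2 + u) q.1, hP u q.2.1]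

lemma chEquiv_wminus' {Y Z : Type} [Fintype Y] [Fintype Z]
    {W : Fin 2 → Y → ℝ} {V : Fin 2 → Z → ℝ} (h : ChEquiv W V) :
    ChEquiv (Wminus W) (Wminus V) :=
  ⟨degraded_wminus' h.1, degraded_wminus' h.2⟩

lemma chEquiv_wplus' {Y Z : Type} [Fintype Y] [Fintype Z]
    {W : Fin 2 → Y → ℝ} {V : Fin 2 → Z → ℝ} (h : ChEquiv W V) :
    ChEquiv (Wplus W) (Wplus V) :=
  ⟨degraded_wplus' h.1, degraded_wplus' h.2⟩

noncomputable def Pm1 : (Option (Fin 2) × Option (Fin 2)) → Option (Fin 2) → ℝ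
  | (some a, some b), z => if z = some (a + b) then 1 else 0
  | (some _, none), z => if z = none then 1 else 0
  | (none, _), z => if z = none then 1 else 0

noncomputable def Pm2 (ε : ℝ) : Option (Fin 2) → (Option (Fin 2) × Option (Fin 2)) → ℝ
  | some s, (some a, some b) => if a + b = s then 1/2 else 0
  | some _, (some _, none) => 0
  | some _, (none, _) => 0
  | none, (some _, some _) => 0
  | none, (some _, none) => (1-ε)/(2*(2-ε))
  | none, (none, some _) => (1-ε)/(2*(2-ε))
  | none, (none, none) => ε/(2-ε)

lemma bec_minus_equiv (ε : ℝ) (h0 : 0 ≤ ε) (h1 : ε ≤ 1) :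
    ChEquiv (Wminus (BEC ε)) (BEC (2 * ε - ε ^ 2)) := by
  have h2 : (2 : ℝ) - ε ≠ 0 := by linarith
  constructor
  · refine ⟨Pm2 ε, ⟨?_, ?_⟩, ?_⟩
    · rintro (_ | s) (⟨_ | a, _ | b⟩) <;> simp [Pm2] <;>
        first
          | positivity
          | (split <;> norm_num)
          | (apply div_nonneg <;> nlinarith)
    · rintro (_ | s)
      · simp [Fintype.sum_prod_type, Fintype.sum_option, Fin.sum_univ_two, Pm2]
        field_simp
        ring
      · fin_cases s <;>
          simp [Fintype.sum_prod_type, Fintype.sum_option, Fin.sum_univ_two, Pm2] <;>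
          norm_num
    · intro x z
      fin_cases x <;>
        rcases z with ⟨_ | a, _ | b⟩ <;>
        simp [Fintype.sum_option, Fin.sum_univ_two, Wminus, BEC, Pm2] <;>
        (try fin_cases a) <;> (try fin_cases b) <;>
        (try simp [Fin.ext_iff]) <;> (try field_simp) <;> (try ring)
  · refine ⟨Pm1, ⟨?_, ?_⟩, ?_⟩
    · rintro (⟨_ | a, _ | b⟩) z <;> simp [Pm1] <;> split <;> norm_num
    · rintro (⟨_ | a, _ | b⟩) <;> simp [Pm1, Fintype.sum_option]
    · intro x z
      fin_cases x <;>
        rcases z with _ | s <;> (try fin_cases s) <;>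
        simp [Fintype.sum_prod_type, Fintype.sum_option, Fin.sum_univ_two, Wminus, BEC, Pm1] <;>
        norm_num <;> ring

noncomputable def Pp1 : (Option (Fin 2) × Option (Fin 2) × Fin 2) → Option (Fin 2) → ℝ
  | (_, some c, _), z => if z = some c then 1 else 0
  | (some a, none, b), z => if z = some (a + b) then 1 else 0
  | (none, none, _), z => if z = none then 1 else 0

noncomputable def Pp2 (ε : ℝ) : Option (Fin 2) → (Option (Fin 2) × Option (Fin 2) × Fin 2) → ℝ
  | some s, (some a, some c, b) => if c = s ∧ a = b + s then (1-ε)/(2*(1+ε)) else 0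
  | some s, (some a, none, b) => if a = b + s then ε/(2*(1+ε)) else 0
  | some s, (none, some c, _) => if c = s then ε/(2*(1+ε)) else 0
  | some _, (none, none, _) => 0
  | none, (none, none, _) => 1/2
  | none, (some _, _, _) => 0
  | none, (none, some _, _) => 0

set_option maxHeartbeats 2000000 in
lemma bec_plus_equiv (ε : ℝ) (h0 : 0 ≤ ε) (h1 : ε ≤ 1) :
    ChEquiv (Wplus (BEC ε)) (BEC (ε ^ 2)) := by
  have h2 : (1 : ℝ) + ε ≠ 0 := by linarith
  constructor
  · refine ⟨Pp2 ε, ⟨?_, ?_⟩, ?_⟩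
    · rintro (_ | s) (⟨_ | a, _ | c, b⟩) <;> simp [Pp2] <;>
        (try split) <;> (try apply div_nonneg) <;> (try nlinarith) <;> norm_num
    · rintro (_ | s)
      · simp [Fintype.sum_prod_type, Fintype.sum_option, Fin.sum_univ_two, Pp2]
        norm_num
      · fin_cases s <;>
          simp [Fintype.sum_prod_type, Fintype.sum_option, Fin.sum_univ_two, Pp2] <;>
          (try field_simp) <;> (try ring)
    · intro x z
      fin_cases x <;>
        rcases z with ⟨_ | a, _ | c, b⟩ <;>
        (try fin_cases a) <;> (try fin_cases c) <;> fin_cases b <;>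
        simp [Fintype.sum_option, Fin.sum_univ_two, Wplus, BEC, Pp2] <;>
        (try field_simp) <;> (try ring)
  · refine ⟨Pp1, ⟨?_, ?_⟩, ?_⟩
    · rintro (⟨_ | a, _ | c, b⟩) z <;> simp [Pp1] <;> (try split) <;> norm_num
    · rintro (⟨_ | a, _ | c, b⟩) <;> simp [Pp1, Fintype.sum_option]
    · intro x z
      fin_cases x <;>
        rcases z with _ | s <;> (try fin_cases s) <;>
        simp [Fintype.sum_prod_type, Fintype.sum_option, Fin.sum_univ_two, Wplus, BEC, Pp1] <;>
        (try norm_num) <;> (try ring)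

lemma becIter_bounds (ε : ℝ) (h0 : 0 ≤ ε) (h1 : ε ≤ 1) :
    ∀ bs : List Bool, 0 ≤ becIter ε bs ∧ becIter ε bs ≤ 1 := by
  intro bs
  induction bs with
  | nil => exact ⟨h0, h1⟩
  | cons b bs ih =>
    obtain ⟨hl, hr⟩ := ih
    cases b
    · exact ⟨by simp only [becIter]; nlinarith, by simp only [becIter]; nlinarith⟩
    · exact ⟨by simp only [becIter]; positivity, by simp only [becIter]; nlinarith⟩

end BecPolarizationAux

/-- Polarization of the BEC: `W⁻ ≅ BEC(2ε−ε²)`, `W⁺ ≅ BEC(ε²)`, and every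
bit-channel of `BEC(ε)` is (equivalent to) a BEC with erasure probability
obtained by iterating these maps. -/

theorem bec_polarization (ε : ℝ) (h0 : 0 ≤ ε) (h1 : ε ≤ 1) :
    ChEquiv (Wminus (BEC ε)) (BEC (2 * ε - ε ^ 2)) ∧
      ChEquiv (Wplus (BEC ε)) (BEC (ε ^ 2)) ∧
      ∀ bs : List Bool, ChEquiv (bitChannel (BEC ε) bs) (BEC (becIter ε bs)) := by
  refine ⟨bec_minus_equiv ε h0 h1, bec_plus_equiv ε h0 h1, ?_⟩
  intro bs
  induction bs with
  | nil => exact ⟨degraded_refl' _, degraded_refl' _⟩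
  | cons b bs ih =>
    obtain ⟨hl, hr⟩ := becIter_bounds ε h0 h1 bs
    cases b
    · exact chEquiv_trans' (chEquiv_wminus' ih) (bec_minus_equiv _ hl hr)
    · exact chEquiv_trans' (chEquiv_wplus' ih) (bec_plus_equiv _ hl hr)
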